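/- Natural-gradient ascent inequality (the per-step core of the paper's first-order stationarity Lemma 4): Let f : ℝ^d → ℝ be differentiable with L-Lipschitz gradient (L > 0), let F be a symmetric d×d real matrix with μ I ⪯ F ⪯ G² I for some 0 < μ and G > 0, let η > 0, let θ ∈ ℝ^d, and set θ* = θ + η F^{-1} ∇f(θ). Then for every θ⁺ ∈ ℝ^d: f(θ⁺) ≥ f(θ) + ( η/(2G²) − Lη²/μ² ) ‖∇f(θ)‖₂² − ( G²/(2η) + L ) ‖θ⁺ − θ*‖₂². -/

import Mathlib

open scoped BigOperators
open Matrix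
open scoped RealInnerProductSpace

set_option maxHeartbeats 1000000

lemma descent_aux {E : Type*} [NormedAddCommGroup E] [InnerProductSpace ℝ E] [CompleteSpace E]
    (f : E → ℝ) (hf : Differentiable ℝ f) (L : ℝ)
    (hlip : ∀ x y, ‖gradient f x - gradient f y‖ ≤ L * ‖x - y‖)
    (x y : E) :
    f x + ⟪gradient f x, y - x⟫ - L / 2 * ‖y - x‖ ^ 2 ≤ f y := by
  set v := y - x with hv
  set ψ : ℝ → ℝ := fun t => f (x + t • v) - t * ⟪gradient f x, v⟫ + L / 2 * t ^ 2 * ‖v‖ ^ 2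
    with hψ
  have hder : ∀ t : ℝ, HasDerivAt ψ
      (⟪gradient f (x + t • v), v⟫ - ⟪gradient f x, v⟫ + L * t * ‖v‖ ^ 2) t := by
    intro t
    have hline : HasDerivAt (fun t : ℝ => x + t • v) v t := by
      simpa using ((hasDerivAt_id t).smul_const v).const_add x
    have h1 : HasDerivAt (fun t : ℝ => f (x + t • v)) ⟪gradient f (x + t • v), v⟫ t := by
      have := ((hf (x + t • v)).hasGradientAt.hasFDerivAt).comp_hasDerivAt t hline
      simpa [InnerProductSpace.toDual_apply_apply, Function.comp_def] using this
    have h2 : HasDerivAt (fun t : ℝ => t * ⟪gradient f x, v⟫) ⟪gradient f x, v⟫ t := by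
      simpa using (hasDerivAt_id t).mul_const ⟪gradient f x, v⟫
    have h3 : HasDerivAt (fun t : ℝ => L / 2 * t ^ 2 * ‖v‖ ^ 2) (L * t * ‖v‖ ^ 2) t := by
      have := ((hasDerivAt_pow 2 t).const_mul (L / 2)).mul_const (‖v‖ ^ 2)
      convert this using 1
      · rfl
      · rfl
      ring
    exact (h1.sub h2).add h3
  have hmono : MonotoneOn ψ (Set.Icc (0:ℝ) 1) := by
    apply monotoneOn_of_deriv_nonneg (convex_Icc 0 1)
    · exact fun t _ => ((hder t).continuousAt).continuousWithinAt
    · intro t ht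
      exact (hder t).differentiableAt.differentiableWithinAt
    · intro t ht
      rw [interior_Icc] at ht
      rw [(hder t).deriv]
      have hbound : |⟪gradient f (x + t • v) - gradient f x, v⟫| ≤ L * t * ‖v‖ ^ 2 := by
        calc |⟪gradient f (x + t • v) - gradient f x, v⟫|
            ≤ ‖gradient f (x + t • v) - gradient f x‖ * ‖v‖ := abs_real_inner_le_norm _ _
          _ ≤ (L * ‖(x + t • v) - x‖) * ‖v‖ := by
              gcongr; exact hlip _ _
          _ = L * t * ‖v‖ ^ 2 := by
              simp [norm_smul, abs_of_pos ht.1]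
              ring
      rw [inner_sub_left] at hbound
      have := neg_le_of_abs_le hbound
      linarith
  have h01 := hmono (Set.left_mem_Icc.2 zero_le_one) (Set.right_mem_Icc.2 zero_le_one) zero_le_one
  simp only [hψ] at h01
  simp only [zero_smul, add_zero, zero_mul, ne_eq, OfNat.ofNat_ne_zero, not_false_eq_true,
    zero_pow, mul_zero, one_smul, one_mul, one_pow, mul_one] at h01
  have hxy : x + v = y := by simp [hv]
  rw [hxy] at h01
  linarith


/-- Natural-gradient ascent inequality: for `f` differentiable with
`L`-Lipschitz gradient, a symmetric matrix `F` with `μI ⪯ F ⪯ G²I`, a step size `η > 0`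
and the exact natural-gradient iterate `θ* = θ + η F⁻¹ ∇f(θ)`, every `θ⁺` satisfies
`f(θ⁺) ≥ f(θ) + (η/(2G²) − Lη²/μ²) ‖∇f(θ)‖² − (G²/(2η) + L) ‖θ⁺ − θ*‖²`. -/
theorem stmt16 {d : ℕ} (f : EuclideanSpace ℝ (Fin d) → ℝ) (hf : Differentiable ℝ f)
    (L : ℝ) (hL : 0 < L)
    (hlip : ∀ x y, ‖gradient f x - gradient f y‖ ≤ L * ‖x - y‖)
    (F : Matrix (Fin d) (Fin d) ℝ) (hsym : F.IsSymm)
    (μ G : ℝ) (hμ : 0 < μ) (hG : 0 < G)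
    (hlow : ∀ v : Fin d → ℝ, μ * ∑ i, v i ^ 2 ≤ v ⬝ᵥ F.mulVec v)
    (hup : ∀ v : Fin d → ℝ, v ⬝ᵥ F.mulVec v ≤ G ^ 2 * ∑ i, v i ^ 2)
    (η : ℝ) (hη : 0 < η)
    (θ θstar : EuclideanSpace ℝ (Fin d))
    (hθstar : ∀ i, θstar i = θ i + η * F⁻¹.mulVec (fun j => gradient f θ j) i) :
    ∀ θplus : EuclideanSpace ℝ (Fin d),
      f θ + (η / (2 * G ^ 2) - L * η ^ 2 / μ ^ 2) * ‖gradient f θ‖ ^ 2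
          - (G ^ 2 / (2 * η) + L) * ‖θplus - θstar‖ ^ 2 ≤ f θplus := by
  intro θplus
  classical
  set g : EuclideanSpace ℝ (Fin d) := gradient f θ with hgdef
  set gv : Fin d → ℝ := fun j => g j with hgvdef
  set w : Fin d → ℝ := F⁻¹.mulVec gv with hwdef
  -- positive definiteness and invertibility
  have hherm : F.IsHermitian := by
    rw [Matrix.IsHermitian, Matrix.conjTranspose_eq_transpose_of_trivial]; exact hsym
  have hpd : F.PosDef := by
    refine Matrix.posDef_iff_dotProduct_mulVec.2 ⟨hherm, fun x hx => ?_⟩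
    obtain ⟨i, hi⟩ := Function.ne_iff.1 hx
    have h1 : 0 < μ * ∑ i, x i ^ 2 :=
      mul_pos hμ (Finset.sum_pos' (fun j _ => sq_nonneg _)
        ⟨i, Finset.mem_univ i, lt_of_le_of_ne (sq_nonneg _) (Ne.symm (pow_ne_zero 2 hi))⟩)
    have := lt_of_lt_of_le h1 (hlow x)
    simpa using this
  have hdet : IsUnit F.det := hpd.det_pos.ne'.isUnit
  have hFw : F.mulVec w = gv := by
    rw [hwdef, Matrix.mulVec_mulVec, Matrix.mul_nonsing_inv F hdet, Matrix.one_mulVec]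
  -- symmetry of the quadratic form
  have hsd : ∀ a b : Fin d → ℝ, a ⬝ᵥ F.mulVec b = b ⬝ᵥ F.mulVec a := by
    intro a b
    rw [Matrix.dotProduct_mulVec, ← Matrix.mulVec_transpose, hsym, dotProduct_comm]
  have hpos0 : ∀ v : Fin d → ℝ, 0 ≤ v ⬝ᵥ F.mulVec v := fun v =>
    le_trans (by positivity) (hlow v)
  set S : ℝ := ∑ i, gv i ^ 2 with hSdef
  have hSnn : 0 ≤ S := by positivity
  have hgg : gv ⬝ᵥ gv = S := by
    simp [dotProduct, hSdef, sq]
  -- lower bound on g ⬝ F⁻¹ g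
  have hgw : S / G ^ 2 ≤ gv ⬝ᵥ w := by
    have key := hpos0 (w - (G ^ 2)⁻¹ • gv)
    have e1 : w ⬝ᵥ F.mulVec w = gv ⬝ᵥ w := by rw [hFw, dotProduct_comm]
    have e2 : gv ⬝ᵥ F.mulVec w = S := by rw [hFw, hgg]
    have e3 : w ⬝ᵥ F.mulVec gv = S := by rw [hsd, hFw, hgg]
    have e4 : gv ⬝ᵥ F.mulVec gv ≤ G ^ 2 * S := hup gv
    have expand : (w - (G ^ 2)⁻¹ • gv) ⬝ᵥ F.mulVec (w - (G ^ 2)⁻¹ • gv)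
        = gv ⬝ᵥ w - 2 * (G ^ 2)⁻¹ * S + (G ^ 2)⁻¹ ^ 2 * (gv ⬝ᵥ F.mulVec gv) := by
      simp only [Matrix.mulVec_sub, Matrix.mulVec_smul, sub_dotProduct,
        dotProduct_sub, smul_dotProduct, dotProduct_smul,
        smul_eq_mul, e1, e2, e3]
      ring
    rw [expand] at key
    have hG2 : (0:ℝ) < G ^ 2 := by positivity
    have e5 : (G ^ 2)⁻¹ ^ 2 * (gv ⬝ᵥ F.mulVec gv) ≤ (G ^ 2)⁻¹ * S := by
      have := mul_le_mul_of_nonneg_left e4 (by positivity : (0:ℝ) ≤ (G ^ 2)⁻¹ ^ 2)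
      calc (G ^ 2)⁻¹ ^ 2 * (gv ⬝ᵥ F.mulVec gv) ≤ (G ^ 2)⁻¹ ^ 2 * (G ^ 2 * S) := this
        _ = (G ^ 2)⁻¹ * S := by field_simp
    rw [div_le_iff₀ hG2]
    have h6 : (G ^ 2)⁻¹ * S ≤ gv ⬝ᵥ w := by linarith
    have h7 := mul_le_mul_of_nonneg_right h6 hG2.le
    have h8 : (G ^ 2)⁻¹ * S * G ^ 2 = S := by field_simp
    linarith
  -- upper bound on ‖w‖²
  set W : ℝ := ∑ i, w i ^ 2 with hWdef
  have hWnn : 0 ≤ W := by positivity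
  have hWle : W ≤ S / μ ^ 2 := by
    have h1 : μ * W ≤ w ⬝ᵥ gv := by
      have := hlow w
      rw [hsd w w] at this -- no-op, keep
      calc μ * W ≤ w ⬝ᵥ F.mulVec w := hlow w
        _ = w ⬝ᵥ gv := by rw [hFw]
    have hcs : (w ⬝ᵥ gv) ^ 2 ≤ W * S := by
      have := Finset.sum_mul_sq_le_sq_mul_sq Finset.univ w gv
      simpa [dotProduct, hWdef, hSdef] using this
    rw [le_div_iff₀ (by positivity : (0:ℝ) < μ ^ 2)]
    rcases eq_or_lt_of_le hWnn with h0 | h0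
    · rw [← h0]; simpa using hSnn
    · have h2 : (μ * W) * (μ * W) ≤ (w ⬝ᵥ gv) * (w ⬝ᵥ gv) :=
        mul_le_mul h1 h1 (mul_nonneg hμ.le hWnn) ((mul_nonneg hμ.le hWnn).trans h1)
      nlinarith [h2, hcs, h0]
  -- norm identities
  have hnormg : ‖g‖ ^ 2 = S := by
    rw [EuclideanSpace.norm_eq, Real.sq_sqrt (by positivity)]
    simp [hSdef, hgvdef, sq_abs]
  have hΔ : ∀ i, (θstar - θ) i = η * w i := by
    intro i
    simp [hθstar i, hwdef, hgvdef, hgdef]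
  have hnormΔ : ‖θstar - θ‖ ^ 2 = η ^ 2 * W := by
    rw [EuclideanSpace.norm_eq, Real.sq_sqrt (by positivity)]
    simp only [Real.norm_eq_abs, sq_abs, hΔ]
    rw [hWdef, Finset.mul_sum]
    congr 1; ext i; ring
  have hinnerΔ : ⟪g, θstar - θ⟫ = η * (gv ⬝ᵥ w) := by
    rw [PiLp.inner_apply]
    simp only [RCLike.inner_apply, conj_trivial, hΔ]
    rw [dotProduct, Finset.mul_sum]
    congr 1; ext i; ring
  -- descent lemma
  have hdes := descent_aux f hf L hlip θ θplus
  -- decomposition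
  have hdecomp : θplus - θ = (θplus - θstar) + (θstar - θ) := by abel
  set U : EuclideanSpace ℝ (Fin d) := θplus - θstar with hUdef
  set a : ℝ := ‖g‖ with hadef
  set b : ℝ := ‖U‖ with hbdef
  have hanneg : 0 ≤ a := norm_nonneg _
  have hbnneg : 0 ≤ b := norm_nonneg _
  have hinner_split : ⟪g, θplus - θ⟫ = ⟪g, U⟫ + η * (gv ⬝ᵥ w) := by
    rw [hdecomp, inner_add_right, hinnerΔ]
  have hinnerU : -(a * b) ≤ ⟪g, U⟫ := by
    have := abs_real_inner_le_norm g U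
    have := neg_le_of_abs_le this
    linarith
  have hnormsplit : ‖θplus - θ‖ ^ 2 ≤ 2 * b ^ 2 + 2 * (η ^ 2 * W) := by
    have h1 : ‖θplus - θ‖ ≤ b + ‖θstar - θ‖ := by
      rw [hdecomp]; exact norm_add_le _ _
    have h2 : 0 ≤ ‖θplus - θ‖ := norm_nonneg _
    nlinarith [sq_nonneg (b - ‖θstar - θ‖), hnormΔ, norm_nonneg (θstar - θ)]
  -- Young's inequality piece
  have hab : a * b ≤ η / (2 * G ^ 2) * a ^ 2 + G ^ 2 / (2 * η) * b ^ 2 := by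
    rw [div_mul_eq_mul_div, div_mul_eq_mul_div,
      div_add_div _ _ (by positivity) (by positivity), le_div_iff₀ (by positivity)]
    nlinarith [sq_nonneg (η * a - G ^ 2 * b), mul_pos hη (by positivity : (0:ℝ) < G ^ 2)]
  -- combine
  have hI2 : η / G ^ 2 * S ≤ η * (gv ⬝ᵥ w) := by
    have := mul_le_mul_of_nonneg_left hgw (le_of_lt hη)
    calc η / G ^ 2 * S = η * (S / G ^ 2) := by ring
      _ ≤ η * (gv ⬝ᵥ w) := this
  have hWmul : L * (η ^ 2 * W) ≤ L * η ^ 2 / μ ^ 2 * S := by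
    have := mul_le_mul_of_nonneg_left hWle (by positivity : (0:ℝ) ≤ L * η ^ 2)
    calc L * (η ^ 2 * W) = L * η ^ 2 * W := by ring
      _ ≤ L * η ^ 2 * (S / μ ^ 2) := this
      _ = L * η ^ 2 / μ ^ 2 * S := by ring
  have hS : a ^ 2 = S := hnormg
  rw [← hS] at hI2 hWmul
  have hLn : L / 2 * ‖θplus - θ‖ ^ 2 ≤ L * b ^ 2 + L * (η ^ 2 * W) := by
    have := mul_le_mul_of_nonneg_left hnormsplit (by positivity : (0:ℝ) ≤ L / 2)
    linarith
  rw [hinner_split] at hdes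
  have key1 : η / G ^ 2 * a ^ 2 = 2 * (η / (2 * G ^ 2) * a ^ 2) := by ring
  linarith [hdes, hinnerU, hI2, hWmul, hab, hLn, key1]
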